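/- Let M be a matroid with adjoint adM and adjoint map φ. If hyperplanes H₁,…,H_m of M satisfy the strict chain H₁∩⋯∩H_m ⊊ H₁∩⋯∩H_{m−1} ⊊ ⋯ ⊊ H₁∩H₂ ⊊ H₁, then {φ(H₁),…,φ(H_m)} is an independent set of adM. -/

import Mathlib

open Set Matroid
open scoped Matroid

namespace AdjointPaper

variable {α β γ : Type*}

/-- The rank of a set `X` in a matroid `M`: the supremum of cardinalities of
independent subsets of `X`. -/
noncomputable def mrank (M : Matroid α) (X : Set α) : ℕ :=
  sSup (Set.ncard '' {I | M.Indep I ∧ I ⊆ X})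

/-- The rank of a matroid. -/
noncomputable def mrk (M : Matroid α) : ℕ := mrank M M.E

/-- A hyperplane of `M`: a coatom of the lattice of flats. -/
def IsHyperplane (M : Matroid α) (H : Set α) : Prop :=
  M.IsFlat H ∧ H ≠ M.E ∧ ∀ F, M.IsFlat F → H ⊂ F → F = M.E

/-- An atom of the lattice of flats of `M`. -/
def IsFlatAtom (M : Matroid α) (P : Set α) : Prop :=
  M.IsFlat P ∧ M.closure ∅ ⊂ P ∧ ∀ F, M.IsFlat F → M.closure ∅ ⊂ F → F ⊆ P → F = P

/-- `e` is a loop of `M`. -/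
def IsLoop (M : Matroid α) (e : α) : Prop := e ∈ M.E ∧ ¬ M.Indep {e}

/-- `M` is loopless. -/
def Loopless (M : Matroid α) : Prop := ∀ e ∈ M.E, M.Indep {e}

/-- `M` is simple: loopless and with no two parallel elements. -/
def Simple (M : Matroid α) : Prop :=
  (∀ e ∈ M.E, M.Indep {e}) ∧
    ∀ e ∈ M.E, ∀ f ∈ M.E, M.closure {e} = M.closure {f} → e = f

/-- `φ` is an adjoint map from `M` to `N`: an injective, order-reversing map on
flats taking hyperplanes of `M` bijectively onto the atoms of `N`, with
`N` of the same rank as `M`. -/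
structure IsAdjointMap (M : Matroid α) (N : Matroid β) (φ : Set α → Set β) : Prop where
  rank_eq : mrk N = mrk M
  flat : ∀ ⦃F⦄, M.IsFlat F → N.IsFlat (φ F)
  inj : ∀ ⦃F F'⦄, M.IsFlat F → M.IsFlat F' → φ F = φ F' → F = F'
  antitone : ∀ ⦃F F'⦄, M.IsFlat F → M.IsFlat F' → F ⊆ F' → φ F' ⊆ φ F
  hyper_atom : ∀ ⦃H⦄, IsHyperplane M H → IsFlatAtom N (φ H)
  atom_surj : ∀ ⦃P⦄, IsFlatAtom N P → ∃ H, IsHyperplane M H ∧ φ H = P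

/-- `N` is an adjoint of `M`. -/
def IsAdjoint (M : Matroid α) (N : Matroid β) : Prop := ∃ φ, IsAdjointMap M N φ

/-- Isomorphism of matroids. -/
def Iso (M : Matroid α) (N : Matroid β) : Prop :=
  ∃ f : α → β, Set.BijOn f M.E N.E ∧ ∀ I ⊆ M.E, (M.Indep I ↔ N.Indep (f '' I))

/-- Connectedness: `M` has nonempty ground set and is not a direct sum of two
matroids on nonempty ground sets. -/
def Conn (M : Matroid α) : Prop :=
  M.E.Nonempty ∧ ∀ (N₁ N₂ : Matroid α) (h : Disjoint N₁.E N₂.E),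
    N₁.E.Nonempty → N₂.E.Nonempty → M ≠ Matroid.disjointSum N₁ N₂ h

/-- A circuit of `M`: a minimal dependent set. -/
def IsCircuit (M : Matroid α) (C : Set α) : Prop :=
  C ⊆ M.E ∧ ¬ M.Indep C ∧ ∀ D, D ⊂ C → M.Indep D

/-- `K` is a connected component of `M`. -/
def ConnComponent (M : Matroid α) (K : Set α) : Prop :=
  K ⊆ M.E ∧ K.Nonempty ∧ Conn (M ↾ K) ∧
    ∀ C, IsCircuit M C → C ⊆ K ∨ Disjoint C K

/-- `M` is a modular matroid: every pair of flats is a modular pair. -/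
def Modular (M : Matroid α) : Prop :=
  ∀ F F', M.IsFlat F → M.IsFlat F' →
    mrank M (M.closure (F ∪ F')) + mrank M (F ∩ F') = mrank M F + mrank M F'

/-- The lattice of flats of `N` is isomorphic to the opposite of the lattice of
flats of `M`. -/
def FlatOpIso (M : Matroid α) (N : Matroid β) : Prop :=
  ∃ ψ : Set α → Set β, (∀ F, M.IsFlat F → N.IsFlat (ψ F)) ∧
    (∀ F F', M.IsFlat F → M.IsFlat F' → (F ⊆ F' ↔ ψ F' ⊆ ψ F)) ∧
    ∀ G, N.IsFlat G → ∃ F, M.IsFlat F ∧ ψ F = G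

/-- A linear subclass of `M`: a set of hyperplanes closed under the hyperplanes
through a comodular intersection of two of its members. The lattice of all
linear subclasses ordered by inclusion is the extension lattice `E(M)`. -/
def LinearSubclass (M : Matroid α) (S : Set (Set α)) : Prop :=
  (∀ H ∈ S, IsHyperplane M H) ∧
    ∀ H₁ ∈ S, ∀ H₂ ∈ S, mrank M (H₁ ∩ H₂) = mrk M - 2 →
      ∀ H₃, IsHyperplane M H₃ → H₁ ∩ H₂ ⊆ H₃ → H₃ ∈ S

/-- `N` is (isomorphic to) the projective geometry `PG (r-1, F)`, via a
representation `f` hitting every point of the projective space exactly once. -/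
def IsProjGeomRep (N : Matroid β) (r : ℕ) (F : Type*) [Field F] : Prop :=
  ∃ f : β → (Fin r → F),
    (∀ e ∈ N.E, f e ≠ 0) ∧
    (∀ e ∈ N.E, ∀ e' ∈ N.E,
      Submodule.span F {f e} = Submodule.span F {f e'} → e = e') ∧
    (∀ v : Fin r → F, v ≠ 0 → ∃ e ∈ N.E, Submodule.span F {f e} = Submodule.span F {v}) ∧
    ∀ I, I ⊆ N.E → (N.Indep I ↔ LinearIndependent F (fun x : I => f x.1))

/-- `N` is (isomorphic to) the finite projective geometry `PG (r-1, q)`. -/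
def IsProjGeom (N : Matroid β) (r q : ℕ) : Prop :=
  ∃ (F : Type) (instF : Field F) (instT : Fintype F),
    @Fintype.card F instT = q ∧ @IsProjGeomRep _ N r F instF

/-- `M` is a projective plane: a simple rank-3 matroid in which every line has
at least three points and every two lines meet. -/
def IsProjPlane (M : Matroid α) : Prop :=
  Simple M ∧ mrk M = 3 ∧
    (∀ L, M.IsFlat L → mrank M L = 2 → 3 ≤ L.ncard) ∧
    ∀ L L', M.IsFlat L → M.IsFlat L' → mrank M L = 2 → mrank M L' = 2 → (L ∩ L').Nonempty

/-- `N` is (isomorphic to) the uniform matroid `U_{r,m}`. -/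
def IsUnif (N : Matroid β) (r m : ℕ) : Prop :=
  N.E.Finite ∧ N.E.ncard = m ∧ ∀ I, I ⊆ N.E → (N.Indep I ↔ I.Finite ∧ I.ncard ≤ r)

section Aux

variable {M : Matroid α} {N : Matroid β} {X Y I J F G A B : Set α} {e q : α}

lemma mrk_def (M : Matroid α) : mrk M = mrank M M.E := rfl

lemma closure_flat' (M : Matroid α) (X : Set α) : M.IsFlat (M.closure X) := by
  rw [closure_def]
  haveI h : Nonempty {F // F ∈ {F | M.IsFlat F ∧ X ∩ M.E ⊆ F}} :=
    ⟨⟨M.E, M.ground_isFlat, inter_subset_right⟩⟩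
  rw [sInter_eq_iInter]
  exact IsFlat.iInter fun F => F.2.1

lemma mrank_eq_ncard_of_basis' [M.Finite] (hI : M.IsBasis' I X) : mrank M X = I.ncard := by
  apply IsGreatest.csSup_eq
  constructor
  · exact ⟨I, ⟨hI.indep, hI.subset⟩, rfl⟩
  · rintro c ⟨J, ⟨hJ, hJX⟩, rfl⟩
    obtain ⟨I', hI', hJI'⟩ := hJ.subset_isBasis'_of_subset hJX
    have hfin : I'.Finite := M.ground_finite.subset hI'.indep.subset_ground
    calc J.ncard ≤ I'.ncard := Set.ncard_le_ncard hJI' hfin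
    _ = I.ncard := by
        rw [Set.ncard_def, Set.ncard_def, hI'.encard_eq_encard hI]

lemma exists_basis'_mrank (M : Matroid α) [M.Finite] (X : Set α) :
    ∃ I, M.IsBasis' I X ∧ mrank M X = I.ncard := by
  obtain ⟨I, hI⟩ := M.exists_isBasis' X
  exact ⟨I, hI, mrank_eq_ncard_of_basis' hI⟩

lemma ncard_le_mrank [M.Finite] (hJ : M.Indep J) (hJX : J ⊆ X) : J.ncard ≤ mrank M X := by
  obtain ⟨I, hI, hEq⟩ := exists_basis'_mrank M X
  rw [hEq]
  obtain ⟨I', hI', hJI'⟩ := hJ.subset_isBasis'_of_subset hJX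
  have hfin : I'.Finite := M.ground_finite.subset hI'.indep.subset_ground
  calc J.ncard ≤ I'.ncard := Set.ncard_le_ncard hJI' hfin
  _ = I.ncard := by rw [Set.ncard_def, Set.ncard_def, hI'.encard_eq_encard hI]

lemma mrank_indep [M.Finite] (hI : M.Indep I) : mrank M I = I.ncard :=
  mrank_eq_ncard_of_basis' hI.isBasis_self.isBasis'

lemma mrank_mono [M.Finite] (h : X ⊆ Y) : mrank M X ≤ mrank M Y := by
  obtain ⟨I, hI, hEq⟩ := exists_basis'_mrank M X
  rw [hEq]
  exact ncard_le_mrank hI.indep (hI.subset.trans h)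

lemma mrank_closure_eq (M : Matroid α) [M.Finite] (X : Set α) :
    mrank M (M.closure X) = mrank M X := by
  obtain ⟨I, hI, hEq⟩ := exists_basis'_mrank M X
  rw [hEq, mrank_eq_ncard_of_basis' hI.isBasis_closure_right.isBasis']

lemma mrank_le_mrk [M.Finite] (hX : X ⊆ M.E) : mrank M X ≤ mrk M := mrank_mono hX

lemma mrank_indep_closure [M.Finite] (hI : M.Indep I) :
    mrank M (M.closure I) = I.ncard := by rw [mrank_closure_eq, mrank_indep hI]

lemma mrank_insert_le [M.Finite] : mrank M (insert e X) ≤ mrank M X + 1 := by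
  obtain ⟨J, hJ, hEq⟩ := exists_basis'_mrank M (insert e X)
  rw [hEq]
  have hfin : J.Finite := M.ground_finite.subset hJ.indep.subset_ground
  have h1 : J \ {e} ⊆ X := by
    intro x hx
    rcases hJ.subset hx.1 with h | h
    · exact absurd h hx.2
    · exact h
  have h2 : (J \ {e}).ncard ≤ mrank M X :=
    ncard_le_mrank (hJ.indep.subset diff_subset) h1
  by_cases he : e ∈ J
  · have := Set.ncard_sdiff_singleton_add_one he hfin
    omega
  · rw [sdiff_singleton_eq_self he] at h2
    omega

lemma mrank_insert_flat_ge [M.Finite] (hF : M.IsFlat F) (he : e ∈ M.E) (heF : e ∉ F) :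
    mrank M F + 1 ≤ mrank M (insert e F) := by
  obtain ⟨I, hI⟩ := M.exists_isBasis F hF.subset_ground
  have hfin : I.Finite := M.ground_finite.subset hI.indep.subset_ground
  have hcl : M.closure I = F := by rw [hI.closure_eq_closure, hF.closure]
  have heI : e ∉ I := fun h => heF (hI.subset h)
  have hind : M.Indep (insert e I) := by
    rw [hI.indep.insert_indep_iff_of_notMem heI]
    exact ⟨he, by rw [hcl]; exact heF⟩
  have hsub : insert e I ⊆ insert e F := insert_subset_insert hI.subset
  have := ncard_le_mrank hind hsub
  rw [Set.ncard_insert_of_notMem heI hfin] at this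
  have hIF : I.ncard = mrank M F := (mrank_eq_ncard_of_basis' hI.isBasis').symm
  omega

lemma mrank_lt_of_flat_ssubset [M.Finite] (hF : M.IsFlat F) (hG : M.IsFlat G) (h : F ⊂ G) :
    mrank M F < mrank M G := by
  obtain ⟨e, heG, heF⟩ := exists_of_ssubset h
  have he : e ∈ M.E := hG.subset_ground heG
  have h1 := mrank_insert_flat_ge hF he heF
  have h2 : mrank M (insert e F) ≤ mrank M G :=
    mrank_mono (insert_subset heG h.subset)
  omega

lemma flat_eq_of_subset_mrank_le [M.Finite] (hF : M.IsFlat F) (hG : M.IsFlat G) (hFG : F ⊆ G)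
    (hr : mrank M G ≤ mrank M F) : F = G := by
  by_contra hne
  exact absurd hr (not_le.mpr (mrank_lt_of_flat_ssubset hF hG ⟨hFG, fun h => hne (hFG.antisymm h)⟩))

lemma mrank_closure_empty (M : Matroid α) [M.Finite] : mrank M (M.closure ∅) = 0 := by
  rw [mrank_closure_eq, mrank_indep M.empty_indep, Set.ncard_empty]

lemma mrank_closure_insert_flat [M.Finite] (hF : M.IsFlat F) (he : e ∈ M.E) (heF : e ∉ F) :
    mrank M (M.closure (insert e F)) = mrank M F + 1 := by
  have h1 : mrank M (M.closure (insert e F)) ≤ mrank M F + 1 := by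
    rw [mrank_closure_eq]; exact mrank_insert_le
  have h2 : insert e F ⊆ M.E := insert_subset he hF.subset_ground
  have h3 : mrank M (insert e F) ≤ mrank M (M.closure (insert e F)) :=
    mrank_mono (M.subset_closure _ h2)
  have h4 := mrank_insert_flat_ge hF he heF
  omega

lemma closure_empty_subset_flat (hF : M.IsFlat F) : M.closure ∅ ⊆ F := by
  have := M.closure_subset_closure (empty_subset F)
  rwa [hF.closure] at this

lemma flat_eq_ground_of_mrk_le [M.Finite] (hF : M.IsFlat F) (h : mrk M ≤ mrank M F) :
    F = M.E :=
  flat_eq_of_subset_mrank_le hF M.ground_isFlat hF.subset_ground h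

lemma IsHyperplane.mrank_add_one [M.Finite] {H : Set α} (hH : IsHyperplane M H) :
    mrank M H + 1 = mrk M := by
  obtain ⟨hHf, hHne, hHmax⟩ := hH
  obtain ⟨e, heE, heH⟩ : ∃ e, e ∈ M.E ∧ e ∉ H := by
    by_contra hcon
    push_neg at hcon
    exact hHne (hHf.subset_ground.antisymm fun x hx => hcon x hx)
  have hsub : H ⊂ M.closure (insert e H) := by
    constructor
    · exact (subset_insert e H).trans
        (M.subset_closure _ (insert_subset heE hHf.subset_ground))
    · intro hcon
      exact heH (hcon (M.subset_closure _ (insert_subset heE hHf.subset_ground)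
        (mem_insert e H)))
  have hE := hHmax _ (closure_flat' M (insert e H)) hsub
  rw [mrk_def, ← hE, mrank_closure_insert_flat hHf heE heH]

lemma indep_singleton_of_not_loop {e : β} (he : e ∈ N.E) (h : e ∉ N.closure ∅) :
    N.Indep {e} := by
  have h2 := (N.empty_indep.insert_indep_iff_of_notMem (notMem_empty e)).mpr
    ⟨he, h⟩
  simpa using h2

lemma IsFlatAtom.closure_singleton {P : Set β} {x : β} (hP : IsFlatAtom N P)
    (hx : x ∈ P) (hx' : x ∉ N.closure ∅) : N.closure {x} = P := by
  obtain ⟨hPf, hPlt, hPmin⟩ := hP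
  have hxE : x ∈ N.E := hPf.subset_ground hx
  apply hPmin
  · exact closure_flat' N {x}
  · constructor
    · exact N.closure_subset_closure (empty_subset {x})
    · intro hcon
      exact hx' (hcon (N.mem_closure_self x hxE))
  · have := N.closure_subset_closure (singleton_subset_iff.mpr hx)
    rwa [hPf.closure] at this

end Aux

section Adj

variable {M : Matroid α} {N : Matroid β} {φ : Set α → Set β} {A B V H : Set α}

lemma adjoint_sum_mono [M.Finite] [N.Finite] (hadj : IsAdjointMap M N φ) :
    ∀ (k : ℕ) {A B : Set α}, M.IsFlat A → M.IsFlat B → A ⊆ B → mrank M B ≤ mrank M A + k →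
      mrank N (φ B) + mrank M B ≤ mrank N (φ A) + mrank M A := by
  intro k
  induction k with
  | zero =>
    intro A B hA hB hAB hle
    have hEq : A = B := flat_eq_of_subset_mrank_le hA hB hAB (by omega)
    subst hEq; exact le_refl _
  | succ k IH =>
    intro A B hA hB hAB hle
    by_cases hBA : B ⊆ A
    · have hEq : A = B := hAB.antisymm hBA
      subst hEq; exact le_refl _
    · obtain ⟨e, heB, heA⟩ := not_subset.mp hBA
      have heE : e ∈ M.E := hB.subset_ground heB
      set A' := M.closure (insert e A) with hA'def
      have hA' : M.IsFlat A' := closure_flat' M _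
      have hA'B : A' ⊆ B := by
        have h1 : insert e A ⊆ B := insert_subset heB hAB
        have := M.closure_subset_closure h1
        rwa [hB.closure] at this
      have hAA' : A ⊆ A' :=
        (subset_insert e A).trans (M.subset_closure _ (insert_subset heE hA.subset_ground))
      have heA' : e ∈ A' := M.subset_closure _ (insert_subset heE hA.subset_ground) (mem_insert e A)
      have hrA' : mrank M A' = mrank M A + 1 := mrank_closure_insert_flat hA heE heA
      have hIH := IH hA' hB hA'B (by omega)
      have hss : φ A' ⊂ φ A := by
        constructor
        · exact hadj.antitone hA hA' hAA'
        · intro hcon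
          have : φ A' = φ A := (hadj.antitone hA hA' hAA').antisymm hcon
          have := hadj.inj hA' hA this
          exact heA (this ▸ heA')
      have hlt := mrank_lt_of_flat_ssubset (hadj.flat hA') (hadj.flat hA) hss
      omega

lemma adjoint_mrank_flat [M.Finite] [N.Finite] (hadj : IsAdjointMap M N φ)
    (hA : M.IsFlat A) : mrank N (φ A) + mrank M A = mrk M := by
  have h1 := adjoint_sum_mono hadj (mrk M) hA M.ground_isFlat hA.subset_ground
    (by rw [← mrk_def]; omega)
  have h2 := adjoint_sum_mono hadj (mrank M A) (closure_flat' M ∅) hA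
    (closure_empty_subset_flat hA) (by rw [mrank_closure_empty]; omega)
  have h3 : mrank N (φ (M.closure ∅)) ≤ mrk N :=
    mrank_le_mrk (hadj.flat (closure_flat' M ∅)).subset_ground
  have h4 := hadj.rank_eq
  have h5 := mrank_closure_empty M
  rw [← mrk_def] at h1
  omega

lemma adjoint_reflect [M.Finite] [N.Finite] (hadj : IsAdjointMap M N φ)
    (hV : M.IsFlat V) (hH : IsHyperplane M H) (hsub : φ H ⊆ φ V) : V ⊆ H := by
  classical
  by_contra hVH
  obtain ⟨q, hqV, hqH⟩ := not_subset.mp hVH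
  have hqE : q ∈ M.E := hV.subset_ground hqV
  obtain ⟨Y, hY⟩ := M.exists_isBasis H hH.1.subset_ground
  have hYfin : Y.Finite := M.ground_finite.subset hY.indep.subset_ground
  have hYH : Y ⊆ H := hY.subset
  have hclY : M.closure Y = H := by rw [hY.closure_eq_closure, hH.1.closure]
  have hqY : q ∉ Y := fun h => hqH (hYH h)
  -- closures of subsets of Y are inside H
  have hclsub : ∀ S : Set α, S ⊆ Y → M.closure S ⊆ H := by
    intro S hS
    have := M.closure_subset_closure hS
    rwa [hclY] at this
  have main : ∀ S : Finset α, ↑S ⊆ Y → φ H ⊆ φ (M.closure (insert q ↑S)) := by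
    intro S
    induction S using Finset.induction_on with
    | empty =>
      intro _
      have h2 : M.closure {q} ⊆ V := by
        have := M.closure_subset_closure (singleton_subset_iff.mpr hqV)
        rwa [hV.closure] at this
      have h3 := hadj.antitone (closure_flat' M {q}) hV h2
      simpa using hsub.trans h3
    | @insert y S hyS IH =>
      intro hsub1
      rw [Finset.coe_insert] at hsub1 ⊢
      have hyY : y ∈ Y := hsub1 (mem_insert y ↑S)
      have hSY : (↑S : Set α) ⊆ Y := (subset_insert y ↑S).trans hsub1
      have IH' := IH hSY
      have hSfin : (↑S : Set α).Finite := S.finite_toSet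
      have hySet : y ∉ (↑S : Set α) := by simpa using hyS
      have hqS : q ∉ (↑S : Set α) := fun h => hqY (hSY h)
      have hqyS : q ∉ insert y (↑S : Set α) := by
        intro h
        rcases h with h | h
        · exact hqY (h ▸ hyY)
        · exact hqS h
      have hSE : (↑S : Set α) ⊆ M.E := hSY.trans (hYH.trans hH.1.subset_ground)
      have hyE : y ∈ M.E := hH.1.subset_ground (hYH hyY)
      -- independence
      have hSind : M.Indep (↑S : Set α) := hY.indep.subset hSY
      have hySind : M.Indep (insert y (↑S : Set α)) :=
        hY.indep.subset (insert_subset hyY hSY)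
      have hqcl : ∀ T : Set α, T ⊆ Y → q ∉ M.closure T := by
        intro T hT h
        exact hqH (hclsub T hT h)
      have hIq : M.Indep (insert q (↑S : Set α)) := by
        rw [hSind.insert_indep_iff_of_notMem hqS]
        exact ⟨hqE, hqcl _ hSY⟩
      have hIqy : M.Indep (insert q (insert y (↑S : Set α))) := by
        rw [hySind.insert_indep_iff_of_notMem hqyS]
        exact ⟨hqE, hqcl _ (insert_subset hyY hSY)⟩
      set Z := M.closure (insert q (↑S : Set α)) with hZdef
      set Z'' := M.closure (insert y (↑S : Set α)) with hZ''def
      set Z' := M.closure (insert q (insert y (↑S : Set α))) with hZ'def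
      have hZ : M.IsFlat Z := closure_flat' M _
      have hZ'' : M.IsFlat Z'' := closure_flat' M _
      have hZ' : M.IsFlat Z' := closure_flat' M _
      set c := S.card with hcdef
      have hcS : (↑S : Set α).ncard = c := by rw [Set.ncard_coe_finset]
      have hrZ : mrank M Z = c + 1 := by
        rw [hZdef, mrank_indep_closure hIq, Set.ncard_insert_of_notMem hqS hSfin, hcS]
      have hrZ'' : mrank M Z'' = c + 1 := by
        rw [hZ''def, mrank_indep_closure hySind, Set.ncard_insert_of_notMem hySet hSfin, hcS]
      have hrZ' : mrank M Z' = c + 2 := by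
        rw [hZ'def, mrank_indep_closure hIqy,
          Set.ncard_insert_of_notMem hqyS (hSfin.insert y),
          Set.ncard_insert_of_notMem hySet hSfin, hcS]
      -- suppose the desired conclusion fails
      by_contra hnot
      -- inclusions
      have hZZ' : Z ⊆ Z' :=
        M.closure_subset_closure (insert_subset_insert (subset_insert _ _))
      have hZ''Z' : Z'' ⊆ Z' := M.closure_subset_closure (subset_insert _ _)
      have hφ1 : φ Z' ⊆ φ Z := hadj.antitone hZ hZ' hZZ'
      have hφ2 : φ Z' ⊆ φ Z'' := hadj.antitone hZ'' hZ' hZ''Z'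
      have haZ : φ H ⊆ φ Z := IH'
      have haZ'' : φ H ⊆ φ Z'' := by
        have hZ''H : Z'' ⊆ H := hclsub _ (insert_subset hyY hSY)
        exact hadj.antitone hZ'' hH.1 hZ''H
      set X := N.closure (φ Z' ∪ φ H) with hXdef
      have hXflat : N.IsFlat X := closure_flat' N _
      have hground : φ Z' ∪ φ H ⊆ N.E :=
        union_subset (hadj.flat hZ').subset_ground (hadj.flat hH.1).subset_ground
      have hXZ : X ⊆ φ Z := by
        have h1 : φ Z' ∪ φ H ⊆ φ Z := union_subset hφ1 haZ
        have := N.closure_subset_closure h1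
        rwa [(hadj.flat hZ).closure] at this
      have hXZ'' : X ⊆ φ Z'' := by
        have h1 : φ Z' ∪ φ H ⊆ φ Z'' := union_subset hφ2 haZ''
        have := N.closure_subset_closure h1
        rwa [(hadj.flat hZ'').closure] at this
      have hφZ'X : φ Z' ⊂ X := by
        constructor
        · exact subset_union_left.trans (N.subset_closure _ hground)
        · intro hcon
          apply hnot
          exact (subset_union_right.trans (N.subset_closure _ hground)).trans hcon
      -- ranks in N via the adjoint rank formula
      have e1 := adjoint_mrank_flat hadj hZ
      have e2 := adjoint_mrank_flat hadj hZ''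
      have e3 := adjoint_mrank_flat hadj hZ'
      have r1 := mrank_lt_of_flat_ssubset (hadj.flat hZ') hXflat hφZ'X
      have r2 : mrank N X ≤ mrank N (φ Z) := mrank_mono hXZ
      have r3 : mrank N X ≤ mrank N (φ Z'') := mrank_mono hXZ''
      have eq1 : X = φ Z :=
        flat_eq_of_subset_mrank_le hXflat (hadj.flat hZ) hXZ (by omega)
      have eq2 : X = φ Z'' :=
        flat_eq_of_subset_mrank_le hXflat (hadj.flat hZ'') hXZ'' (by omega)
      have hZeq : Z = Z'' := hadj.inj hZ hZ'' (eq1.symm.trans eq2)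
      have hqZ : q ∈ Z := M.subset_closure _ (insert_subset hqE hSE) (mem_insert q _)
      have hqZ'' : q ∈ Z'' := hZeq ▸ hqZ
      rw [hZ''def] at hqZ''
      exact hqH (hclsub _ (insert_subset hyY hSY) hqZ'')
  -- instantiate with S = Y
  have hfinal := main hYfin.toFinset (by rw [Set.Finite.coe_toFinset])
  rw [Set.Finite.coe_toFinset] at hfinal
  have hYcard : Y.ncard = mrank M H := (mrank_eq_ncard_of_basis' hY.isBasis').symm
  have hIqY : M.Indep (insert q Y) := by
    rw [hY.indep.insert_indep_iff_of_notMem hqY]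
    exact ⟨hqE, fun h => hqH (hclY ▸ h)⟩
  have hEq : M.closure (insert q Y) = M.E := by
    apply flat_eq_ground_of_mrk_le (closure_flat' M _)
    rw [mrank_indep_closure hIqY, Set.ncard_insert_of_notMem hqY hYfin, hYcard]
    have := hH.mrank_add_one
    omega
  rw [hEq] at hfinal
  -- final contradiction: φ M.E has rank 0 but contains a nonloop
  have h0 : mrank N (φ M.E) + mrank M M.E = mrk M :=
    adjoint_mrank_flat hadj M.ground_isFlat
  rw [← mrk_def] at h0
  have h0' : mrank N (φ M.E) = 0 := by omega
  obtain ⟨hflatH, hltH, -⟩ := hadj.hyper_atom hH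
  obtain ⟨x, hx1, hx2⟩ := exists_of_ssubset hltH
  have hxE : x ∈ N.E := hflatH.subset_ground hx1
  have hxind : N.Indep {x} := indep_singleton_of_not_loop hxE hx2
  have hxsub : {x} ⊆ φ M.E := singleton_subset_iff.mpr (hfinal hx1)
  have := ncard_le_mrank hxind hxsub
  rw [Set.ncard_singleton, h0'] at this
  omega

end Adj

/-- a strictly decreasing chain of intersections of hyperplanes of
`M` yields an independent set of atoms in the adjoint. -/
theorem statement_1 {M : Matroid α} {N : Matroid β} [M.Finite] [N.Finite]
    {φ : Set α → Set β} (hφ : IsAdjointMap M N φ) {m : ℕ}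
    (H : Fin m → Set α) (hH : ∀ i, IsHyperplane M (H i))
    (hchain : ∀ i j : Fin m, i < j →
      (⋂ k ∈ {k : Fin m | k ≤ j}, H k) ⊂ ⋂ k ∈ {k : Fin m | k ≤ i}, H k)
    (f : Fin m → β) (hf : ∀ i, f i ∈ φ (H i) \ N.closure ∅) :
    N.Indep (Set.range f) := by
  rcases Nat.eq_zero_or_pos m with hm | hm
  · subst hm
    rw [Set.range_eq_empty]
    exact N.empty_indep
  -- notation
  set F : Fin m → Set α := fun j => ⋂ k ∈ {k : Fin m | k ≤ j}, H k with hFdef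
  have hFflat : ∀ j : Fin m, M.IsFlat (F j) := by
    intro j
    rw [hFdef]
    simp only [Set.biInter_eq_iInter]
    haveI : Nonempty {k // k ∈ {k : Fin m | k ≤ j}} := ⟨⟨j, le_refl j⟩⟩
    exact IsFlat.iInter fun k => (hH k.1).1
  have hFsub : ∀ j k : Fin m, k ≤ j → F j ⊆ H k := by
    intro j k hk
    exact Set.biInter_subset_of_mem hk
  have hfE : ∀ k : Fin m, f k ∈ N.E :=
    fun k => (hφ.flat (hH k).1).subset_ground (hf k).1
  -- the main induction
  have claim : ∀ t : ℕ, ∀ ht : t < m, N.Indep (f '' {k : Fin m | k ≤ ⟨t, ht⟩}) := by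
    intro t
    induction t with
    | zero =>
      intro ht
      have hset : {k : Fin m | k ≤ (⟨0, ht⟩ : Fin m)} = {(⟨0, ht⟩ : Fin m)} := by
        ext k
        simp only [Set.mem_setOf_eq, Set.mem_singleton_iff]
        constructor
        · intro h
          exact le_antisymm h (show (0 : ℕ) ≤ (k : ℕ) from Nat.zero_le _)
        · intro h; exact h.le
      rw [hset, Set.image_singleton]
      exact indep_singleton_of_not_loop (hfE _) (hf _).2
    | succ t IHt =>
      intro ht
      have htm : t < m := Nat.lt_of_succ_lt ht
      set jt : Fin m := ⟨t, htm⟩ with hjtdef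
      set j' : Fin m := ⟨t + 1, ht⟩ with hj'def
      have IH := IHt htm
      -- the image lies in φ (F jt)
      have himg : f '' {k : Fin m | k ≤ jt} ⊆ φ (F jt) := by
        rintro x ⟨k, hk, rfl⟩
        exact hφ.antitone (hFflat jt) (hH k).1 (hFsub jt k hk) (hf k).1
      have hkey : f j' ∉ N.closure (f '' {k : Fin m | k ≤ jt}) := by
        intro hmem
        have hclsub : N.closure (f '' {k : Fin m | k ≤ jt}) ⊆ φ (F jt) := by
          have := N.closure_subset_closure himg
          rwa [(hφ.flat (hFflat jt)).closure] at this
        have hf' : f j' ∈ φ (F jt) := hclsub hmem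
        have hatom := hφ.hyper_atom (hH j')
        have hcs : N.closure {f j'} = φ (H j') :=
          hatom.closure_singleton (hf j').1 (hf j').2
        have hsub2 : φ (H j') ⊆ φ (F jt) := by
          rw [← hcs]
          have := N.closure_subset_closure (singleton_subset_iff.mpr hf')
          rwa [(hφ.flat (hFflat jt)).closure] at this
        have hrefl : F jt ⊆ H j' := adjoint_reflect hφ (hFflat jt) (hH j') hsub2
        have hFF : F jt ⊆ F j' := by
          rw [hFdef]
          apply Set.subset_iInter₂
          intro k hk
          have hk' : (k : ℕ) ≤ t + 1 := hk
          rcases Nat.lt_or_ge k.val (t + 1) with h | h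
          · exact hFsub jt k (show (k : ℕ) ≤ t from Nat.lt_succ_iff.mp h)
          · have hkj : k = j' := Fin.ext (show (k : ℕ) = t + 1 by omega)
            rw [hkj]
            exact hrefl
        have hlt : jt < j' := by
          rw [Fin.lt_def]
          exact Nat.lt_succ_self t
        exact (hchain jt j' hlt).not_subset hFF
      have hset : {k : Fin m | k ≤ j'} = insert j' {k : Fin m | k ≤ jt} := by
        ext k
        simp only [Set.mem_setOf_eq, Set.mem_insert_iff]
        constructor
        · intro h
          have h' : (k : ℕ) ≤ t + 1 := h
          rcases Nat.lt_or_ge k.val (t + 1) with h2 | h2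
          · exact Or.inr (show (k : ℕ) ≤ t from Nat.lt_succ_iff.mp h2)
          · exact Or.inl (Fin.ext (show (k : ℕ) = t + 1 by omega))
        · rintro (rfl | h)
          · exact le_refl _
          · have h' : (k : ℕ) ≤ t := h
            exact (show (k : ℕ) ≤ t + 1 by omega)
      rw [hset, Set.image_insert_eq]
      rw [IH.insert_indep_iff]
      exact Or.inl ⟨hfE j', hkey⟩
  -- conclude
  obtain ⟨t, rfl⟩ : ∃ t, m = t + 1 := ⟨m - 1, by omega⟩
  have hfin := claim t (Nat.lt_succ_self t)
  have huniv : {k : Fin (t+1) | k ≤ ⟨t, Nat.lt_succ_self t⟩} = Set.univ := by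
    ext k
    simp only [Set.mem_setOf_eq, Set.mem_univ, iff_true]
    exact (show (k : ℕ) ≤ t from Nat.lt_succ_iff.mp k.isLt)
  rw [huniv, Set.image_univ] at hfin
  exact hfin

end AdjointPaper
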